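/- Let k > 0 and let (φ, d, Γ) : I → ℝ³ solve φ' = -dφ, d' = -(d² + Γ)/2 + φ - 4k², Γ' = 2d(φ - 4k² - Γ) on an interval I containing 0, with φ(t) ≠ 0 for all t. Then (d(t)² - Γ(t) + 2φ(t))/φ(t) is constant on I. -/

import Mathlib

/-- Second material invariant: along solutions of the spectral dynamics system
`φ' = -dφ`, `d' = -(d² + Γ)/2 + φ - 4k²`, `Γ' = 2d(φ - 4k² - Γ)` with `φ ≠ 0`,
the quantity `(d² - Γ + 2φ)/φ` is constant. -/
theorem second_material_invariant (k : ℝ) (hk : 0 < k) (I : Set ℝ)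
    (hI : I.OrdConnected) (h0 : (0 : ℝ) ∈ I)
    (φ d Γ : ℝ → ℝ)
    (hφ : ∀ t ∈ I, HasDerivAt φ (-(d t) * φ t) t)
    (hd : ∀ t ∈ I, HasDerivAt d (-((d t) ^ 2 + Γ t) / 2 + φ t - 4 * k ^ 2) t)
    (hΓ : ∀ t ∈ I, HasDerivAt Γ (2 * d t * (φ t - 4 * k ^ 2 - Γ t)) t)
    (hne : ∀ t ∈ I, φ t ≠ 0) :
    ∀ t ∈ I, ((d t) ^ 2 - Γ t + 2 * φ t) / φ t
      = ((d 0) ^ 2 - Γ 0 + 2 * φ 0) / φ 0 := by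
  set F : ℝ → ℝ := fun t => ((d t) ^ 2 - Γ t + 2 * φ t) / φ t with hF
  have key : ∀ t ∈ I, HasDerivAt F 0 t := by
    intro t ht
    have hnum : HasDerivAt (fun t => (d t) ^ 2 - Γ t + 2 * φ t)
        (2 * d t * (-((d t) ^ 2 + Γ t) / 2 + φ t - 4 * k ^ 2)
          - 2 * d t * (φ t - 4 * k ^ 2 - Γ t) + 2 * (-(d t) * φ t)) t := by
      have := (((hd t ht).pow 2).sub (hΓ t ht)).add ((hφ t ht).const_mul 2)
      refine this.congr_deriv ?_
      ring
    have := hnum.div (hφ t ht) (hne t ht)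
    refine this.congr_deriv ?_
    field_simp
    ring
  intro t ht
  rcases eq_or_ne t 0 with rfl | htne
  · rfl
  have hsub : Set.uIcc 0 t ⊆ I := hI.uIcc_subset h0 ht
  have hab : min 0 t < max 0 t := min_lt_max.2 htne.symm
  have hud : UniqueDiffOn ℝ (Set.uIcc 0 t) := uniqueDiffOn_Icc hab
  have hconv : Convex ℝ (Set.uIcc 0 t) := convex_uIcc 0 t
  have hdiff : DifferentiableOn ℝ F (Set.uIcc 0 t) := fun x hx =>
    ((key x (hsub hx)).differentiableAt.differentiableWithinAt)
  have hfd : ∀ x ∈ Set.uIcc 0 t, fderivWithin ℝ F (Set.uIcc 0 t) x = 0 := by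
    intro x hx
    have h : HasFDerivWithinAt F (ContinuousLinearMap.smulRight (1 : ℝ →L[ℝ] ℝ) 0) (Set.uIcc 0 t) x := (key x (hsub hx)).hasFDerivAt.hasFDerivWithinAt
    have := h.fderivWithin (hud x hx)
    rw [this]
    ext
    simp
  exact hconv.is_const_of_fderivWithin_eq_zero hdiff hfd
    (Set.right_mem_uIcc) (Set.left_mem_uIcc)
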